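/- For a symmetric conductance matrix A of a network on n vertices whose underlying graph has maximum clique size k, and for 1 < p < 2, the largest eigenvalue satisfies λ₁(A) ≤ φ_{p/(2(p-1))}(k)^{(p-1)/p} · ‖A‖_p, where ‖A‖_p is the entrywise L^p-quasinorm. -/

import Mathlib

/-- `φ_θ(k) = sup { ∑_{i ≠ j} |v i|^θ |v j|^θ : v ∈ ℝ^k, ‖v‖₁ = 1 }`. -/
noncomputable def phiVar (θ : ℝ) (k : ℕ) : ℝ :=
  ⨆ v : {v : Fin k → ℝ // ∑ i, |v i| = 1},
    ∑ i : Fin k, ∑ j : Fin k, if i ≠ j then |v.1 i| ^ θ * |v.1 j| ^ θ else 0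

lemma rpow_superadd {a b θ : ℝ} (ha : 0 ≤ a) (hb : 0 ≤ b) (hθ : 1 ≤ θ) :
    a ^ θ + b ^ θ ≤ (a + b) ^ θ := by
  lift a to NNReal using ha
  lift b to NNReal using hb
  have := NNReal.add_rpow_le_rpow_add a b hθ
  exact_mod_cast this

lemma le_phiVar {θ : ℝ} (hθ : 0 < θ) {k : ℕ} (w : Fin k → ℝ) (hw : ∑ i, |w i| = 1) :
    (∑ i : Fin k, ∑ j : Fin k, if i ≠ j then |w i| ^ θ * |w j| ^ θ else 0) ≤ phiVar θ k := by
  have hbdd : BddAbove (Set.range fun v : {v : Fin k → ℝ // ∑ i, |v i| = 1} =>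
      ∑ i : Fin k, ∑ j : Fin k, if i ≠ j then |v.1 i| ^ θ * |v.1 j| ^ θ else 0) := by
    refine ⟨(k : ℝ) * k, ?_⟩
    rintro x ⟨v, rfl⟩
    have habs : ∀ i, |v.1 i| ≤ 1 := by
      intro i
      calc |v.1 i| ≤ ∑ i, |v.1 i| :=
        Finset.single_le_sum (f := fun i => |v.1 i|) (fun i _ => abs_nonneg _) (Finset.mem_univ i)
      _ = 1 := v.2
    have : ∀ i j : Fin k, (if i ≠ j then |v.1 i| ^ θ * |v.1 j| ^ θ else 0) ≤ 1 := by
      intro i j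
      split
      · exact mul_le_one₀ (Real.rpow_le_one (abs_nonneg _) (habs i) hθ.le)
          (Real.rpow_nonneg (abs_nonneg _) _) (Real.rpow_le_one (abs_nonneg _) (habs j) hθ.le)
      · norm_num
    calc (∑ i : Fin k, ∑ j : Fin k, if i ≠ j then |v.1 i| ^ θ * |v.1 j| ^ θ else 0)
        ≤ ∑ i : Fin k, ∑ j : Fin k, (1 : ℝ) := by
          apply Finset.sum_le_sum; intro i _; apply Finset.sum_le_sum; intro j _; exact this i j
      _ = (k : ℝ) * k := by simp [mul_comm]
  exact le_ciSup hbdd ⟨w, hw⟩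

lemma phiVar_nonneg {θ : ℝ} (hθ : 0 < θ) {k : ℕ} (hk : 1 ≤ k) : 0 ≤ phiVar θ k := by
  have : (0:ℕ) < k := hk
  have hne : Nonempty (Fin k) := ⟨⟨0, this⟩⟩
  set w : Fin k → ℝ := fun i => if i = ⟨0, this⟩ then 1 else 0 with hwdef
  have hw : ∑ i, |w i| = 1 := by simp [hwdef, apply_ite abs]
  refine le_trans ?_ (le_phiVar hθ w hw)
  apply Finset.sum_nonneg; intro i _; apply Finset.sum_nonneg; intro j _
  split
  · exact mul_nonneg (Real.rpow_nonneg (abs_nonneg _) _) (Real.rpow_nonneg (abs_nonneg _) _)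
  · exact le_refl 0

lemma sum_offdiag_eq {ι : Type*} [Fintype ι] [DecidableEq ι] (a : ι → ℝ) :
    (∑ i, ∑ j, if i ≠ j then a i * a j else 0) = (∑ i, a i) ^ 2 - ∑ i, a i ^ 2 := by
  have : ∀ i : ι, (∑ j, if i ≠ j then a i * a j else 0)
      = a i * (∑ j, a j) - a i ^ 2 := by
    intro i
    have : (∑ j, if i ≠ j then a i * a j else 0)
        = ∑ j, (a i * a j - if i = j then a i * a j else 0) := by
      apply Finset.sum_congr rfl; intro j _
      by_cases h : i = j <;> simp [h]
    rw [this, Finset.sum_sub_distrib, ← Finset.mul_sum, Finset.sum_ite_eq, if_pos (Finset.mem_univ i), sq]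
  rw [Finset.sum_congr rfl fun i _ => this i, Finset.sum_sub_distrib, ← Finset.sum_mul, sq]

lemma compress {n k : ℕ} (s : Finset (Fin n)) (hcard : s.card ≤ k) (v : Fin n → ℝ)
    (hsupp : ∀ i, i ∉ s → v i = 0) :
    ∃ w : Fin k → ℝ, ∀ φ : ℝ → ℝ, φ 0 = 0 → ∑ j, φ (w j) = ∑ i, φ (v i) := by
  have hcard' : Fintype.card ↥s ≤ Fintype.card (Fin k) := by
    simpa [Fintype.card_coe] using hcard
  rcases s.eq_empty_or_nonempty with rfl | ⟨i0, hi0⟩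
  · refine ⟨fun _ => 0, fun φ hφ => ?_⟩
    have : ∀ i : Fin n, v i = 0 := fun i => hsupp i (by simp)
    simp [hφ, this]
  have : Nonempty ↥s := ⟨⟨i0, hi0⟩⟩
  obtain ⟨g⟩ := Function.Embedding.nonempty_of_card_le hcard'
  classical
  set t : Finset (Fin k) := s.attach.image g with ht
  refine ⟨fun j => if h : j ∈ t then v ↑(Function.invFun g j) else 0, ?_⟩
  intro φ hφ
  have hinv : ∀ i : ↥s, Function.invFun g (g i) = i := fun i =>
    Function.leftInverse_invFun g.injective i
  have hw : ∀ i : ↥s, (fun j => if h : j ∈ t then v ↑(Function.invFun g j) else 0) (g i) = v ↑i := by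
    intro i
    have : g i ∈ t := Finset.mem_image.2 ⟨i, Finset.mem_attach _ _, rfl⟩
    simp [this, hinv]
  calc ∑ j : Fin k, φ ((fun j => if h : j ∈ t then v ↑(Function.invFun g j) else 0) j)
      = ∑ j ∈ t, φ ((fun j => if h : j ∈ t then v ↑(Function.invFun g j) else 0) j) := by
        refine (Finset.sum_subset (Finset.subset_univ t) ?_).symm
        intro j _ hj
        simp [hj, hφ]
    _ = ∑ i ∈ s.attach, φ ((fun j => if h : j ∈ t then v ↑(Function.invFun g j) else 0) (g i)) := by
        rw [ht]
        exact Finset.sum_image fun a _ b _ hab => g.injective hab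
    _ = ∑ i ∈ s.attach, φ (v ↑i) := by
        apply Finset.sum_congr rfl; intro i _; rw [hw i]
    _ = ∑ i ∈ s, φ (v i) := Finset.sum_attach s (fun i => φ (v i))
    _ = ∑ i : Fin n, φ (v i) := by
        refine Finset.sum_subset (Finset.subset_univ s) ?_
        intro i _ hi
        rw [hsupp i hi, hφ]

lemma MS_clique {n : ℕ} {θ : ℝ} (hθ : 1 ≤ θ) {k : ℕ}
    (G : SimpleGraph (Fin n)) [DecidableRel G.Adj]
    (s : Finset (Fin n)) (hcard : s.card ≤ k) (v : Fin n → ℝ) (hv : ∀ i, 0 ≤ v i)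
    (hsum : ∑ i, v i = 1) (hsupp : ∀ i, i ∉ s → v i = 0) :
    (∑ i, ∑ j, if G.Adj i j then v i ^ θ * v j ^ θ else 0) ≤ phiVar θ k := by
  have hθ0 : (0:ℝ) < θ := lt_of_lt_of_le one_pos hθ
  obtain ⟨w, hw⟩ := compress s hcard v hsupp
  have habs : ∀ i, |v i| = v i := fun i => abs_of_nonneg (hv i)
  have hw1 : ∑ j, |w j| = 1 := by
    rw [hw abs abs_zero]
    simp only [habs]
    exact hsum
  have step1 : (∑ i, ∑ j, if G.Adj i j then v i ^ θ * v j ^ θ else 0)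
      ≤ ∑ i, ∑ j, if i ≠ j then |v i| ^ θ * |v j| ^ θ else 0 := by
    apply Finset.sum_le_sum; intro i _; apply Finset.sum_le_sum; intro j _
    by_cases h : G.Adj i j
    · rw [if_pos h, if_pos (G.ne_of_adj h), habs, habs]
    · rw [if_neg h]
      split
      · exact mul_nonneg (Real.rpow_nonneg (abs_nonneg _) _) (Real.rpow_nonneg (abs_nonneg _) _)
      · exact le_refl 0
  have φ1 : (fun x : ℝ => |x| ^ θ) 0 = 0 := by
    simp [Real.zero_rpow (ne_of_gt hθ0)]
  have φ2 : (fun x : ℝ => (|x| ^ θ) ^ 2) 0 = 0 := by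
    simp [Real.zero_rpow (ne_of_gt hθ0)]
  have step2 : (∑ i, ∑ j, if i ≠ j then |v i| ^ θ * |v j| ^ θ else 0)
      = ∑ i, ∑ j, if i ≠ j then |w i| ^ θ * |w j| ^ θ else 0 := by
    rw [sum_offdiag_eq (fun i => |v i| ^ θ), sum_offdiag_eq (fun i => |w i| ^ θ),
      hw (fun x : ℝ => |x| ^ θ) φ1, hw (fun x : ℝ => (|x| ^ θ) ^ 2) φ2]
  calc (∑ i, ∑ j, if G.Adj i j then v i ^ θ * v j ^ θ else 0)
      ≤ ∑ i, ∑ j, if i ≠ j then |v i| ^ θ * |v j| ^ θ else 0 := step1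
    _ = ∑ i, ∑ j, if i ≠ j then |w i| ^ θ * |w j| ^ θ else 0 := step2
    _ ≤ phiVar θ k := le_phiVar hθ0 w hw1

lemma decomp {n : ℕ} (G : SimpleGraph (Fin n)) [DecidableRel G.Adj] (θ : ℝ)
    (u : Fin n → ℝ) {i j : Fin n} (hij : i ≠ j) (hnadj : ¬ G.Adj i j) :
    (∑ a, ∑ b, if G.Adj a b then u a ^ θ * u b ^ θ else 0)
    = 2 * (u i ^ θ * (∑ b ∈ Finset.univ \ {i, j}, if G.Adj i b then u b ^ θ else 0))
    + 2 * (u j ^ θ * (∑ b ∈ Finset.univ \ {i, j}, if G.Adj j b then u b ^ θ else 0))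
    + ∑ a ∈ Finset.univ \ {i, j}, ∑ b ∈ Finset.univ \ {i, j},
        (if G.Adj a b then u a ^ θ * u b ^ θ else 0) := by
  classical
  set D := Finset.univ \ ({i, j} : Finset (Fin n)) with hD
  have hsub : ({i, j} : Finset (Fin n)) ⊆ Finset.univ := Finset.subset_univ _
  have hpair : ∀ F : Fin n → ℝ, (∑ a, F a) = ∑ a ∈ D, F a + (F i + F j) := by
    intro F
    rw [← Finset.sum_sdiff hsub, ← hD]
    congr 1
    rw [Finset.sum_insert (by simp [hij]), Finset.sum_singleton]
  have hrow : ∀ a, (∑ b, if G.Adj a b then u a ^ θ * u b ^ θ else 0)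
      = (∑ b ∈ D, if G.Adj a b then u a ^ θ * u b ^ θ else 0)
      + ((if G.Adj a i then u a ^ θ * u i ^ θ else 0)
        + (if G.Adj a j then u a ^ θ * u j ^ θ else 0)) :=
    fun a => hpair _
  have hii : ¬ G.Adj i i := G.irrefl
  have hjj : ¬ G.Adj j j := G.irrefl
  have hji : ¬ G.Adj j i := fun h => hnadj h.symm
  have extract : ∀ (c : Fin n) (x : ℝ), (∑ b ∈ D, if G.Adj c b then x * u b ^ θ else 0)
      = x * ∑ b ∈ D, (if G.Adj c b then u b ^ θ else 0) := by
    intro c x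
    rw [Finset.mul_sum]
    apply Finset.sum_congr rfl; intro b _
    split <;> simp
  have extract' : ∀ (c : Fin n) (x : ℝ), (∑ a ∈ D, if G.Adj a c then u a ^ θ * x else 0)
      = x * ∑ a ∈ D, (if G.Adj c a then u a ^ θ else 0) := by
    intro c x
    rw [Finset.mul_sum]
    apply Finset.sum_congr rfl; intro a _
    by_cases h : G.Adj a c
    · rw [if_pos h, if_pos ((G.adj_comm c a).2 h)]; ring
    · rw [if_neg h, if_neg (fun hh => h ((G.adj_comm c a).1 hh))]; ring
  calc (∑ a, ∑ b, if G.Adj a b then u a ^ θ * u b ^ θ else 0)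
      = ∑ a ∈ D, (∑ b, if G.Adj a b then u a ^ θ * u b ^ θ else 0)
        + ((∑ b, if G.Adj i b then u i ^ θ * u b ^ θ else 0)
          + (∑ b, if G.Adj j b then u j ^ θ * u b ^ θ else 0)) :=
        hpair _
    _ = (∑ a ∈ D, ((∑ b ∈ D, if G.Adj a b then u a ^ θ * u b ^ θ else 0)
          + ((if G.Adj a i then u a ^ θ * u i ^ θ else 0)
            + (if G.Adj a j then u a ^ θ * u j ^ θ else 0))))
        + (((∑ b ∈ D, if G.Adj i b then u i ^ θ * u b ^ θ else 0)
            + ((if G.Adj i i then u i ^ θ * u i ^ θ else 0)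
              + (if G.Adj i j then u i ^ θ * u j ^ θ else 0)))
          + ((∑ b ∈ D, if G.Adj j b then u j ^ θ * u b ^ θ else 0)
            + ((if G.Adj j i then u j ^ θ * u i ^ θ else 0)
              + (if G.Adj j j then u j ^ θ * u j ^ θ else 0)))) := by
        rw [Finset.sum_congr rfl (fun a _ => hrow a), hrow i, hrow j]
    _ = (∑ a ∈ D, ∑ b ∈ D, (if G.Adj a b then u a ^ θ * u b ^ θ else 0))
        + ((∑ a ∈ D, if G.Adj a i then u a ^ θ * u i ^ θ else 0)
          + (∑ a ∈ D, if G.Adj a j then u a ^ θ * u j ^ θ else 0))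
        + ((∑ b ∈ D, if G.Adj i b then u i ^ θ * u b ^ θ else 0)
          + (∑ b ∈ D, if G.Adj j b then u j ^ θ * u b ^ θ else 0)) := by
        rw [if_neg hii, if_neg hjj, if_neg hnadj, if_neg hji, Finset.sum_add_distrib,
          Finset.sum_add_distrib]
        ring
    _ = _ := by
        rw [extract i (u i ^ θ), extract j (u j ^ θ), extract' i (u i ^ θ), extract' j (u j ^ θ)]
        ring

lemma MS {n : ℕ} {θ : ℝ} (hθ : 1 ≤ θ) {k : ℕ}
    (G : SimpleGraph (Fin n)) [DecidableRel G.Adj]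
    (hmax : ∀ s : Finset (Fin n), G.IsClique (s : Set (Fin n)) → s.card ≤ k) :
    ∀ (N : ℕ) (v : Fin n → ℝ), (∀ i, 0 ≤ v i) → (∑ i, v i = 1) →
    ((Finset.univ.filter fun i => v i ≠ 0).card ≤ N) →
    (∑ i, ∑ j, if G.Adj i j then v i ^ θ * v j ^ θ else 0) ≤ phiVar θ k := by
  classical
  intro N
  induction N with
  | zero =>
    intro v hv hsum hcard
    set s := Finset.univ.filter fun i => v i ≠ 0 with hs
    have hsupp : ∀ i, i ∉ s → v i = 0 := by
      intro i hi
      by_contra h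
      exact hi (Finset.mem_filter.2 ⟨Finset.mem_univ i, h⟩)
    by_cases hc : G.IsClique (s : Set (Fin n))
    · exact MS_clique hθ G s (hmax s hc) v hv hsum hsupp
    · exfalso
      rw [SimpleGraph.isClique_iff] at hc
      rw [Set.Pairwise] at hc
      push_neg at hc
      obtain ⟨i, his, -⟩ := hc
      have hs0 : s = ∅ := Finset.card_eq_zero.1 (Nat.le_zero.1 hcard)
      rw [hs0] at his
      simp at his
  | succ N ih =>
    intro v hv hsum hcard
    set s := Finset.univ.filter fun i => v i ≠ 0 with hs
    have hsupp : ∀ i, i ∉ s → v i = 0 := by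
      intro i hi
      by_contra h
      exact hi (Finset.mem_filter.2 ⟨Finset.mem_univ i, h⟩)
    by_cases hc : G.IsClique (s : Set (Fin n))
    · exact MS_clique hθ G s (hmax s hc) v hv hsum hsupp
    rw [SimpleGraph.isClique_iff, Set.Pairwise] at hc
    push_neg at hc
    obtain ⟨i, his, j, hjs, hij, hnadj⟩ := hc
    have his' : i ∈ s := his
    have hjs' : j ∈ s := hjs
    -- key step, stated for any (i,j) with P ≤ Q
    have key : ∀ (i j : Fin n), i ∈ s → j ∈ s → i ≠ j → ¬ G.Adj i j →
        ((∑ b ∈ Finset.univ \ {i, j}, if G.Adj i b then v b ^ θ else 0)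
          ≤ (∑ b ∈ Finset.univ \ {i, j}, if G.Adj j b then v b ^ θ else 0)) →
        (∑ a, ∑ b, if G.Adj a b then v a ^ θ * v b ^ θ else 0) ≤ phiVar θ k := by
      clear hij hnadj his hjs his' hjs' i j
      intro i j his hjs hij hnadj hPQ
      set v' : Fin n → ℝ := Function.update (Function.update v i 0) j (v i + v j) with hv'
      have hv'i : v' i = 0 := by
        rw [hv', Function.update_of_ne hij, Function.update_self]
      have hv'j : v' j = v i + v j := by
        rw [hv', Function.update_self]
      have hv'l : ∀ l, l ≠ i → l ≠ j → v' l = v l := by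
        intro l hl1 hl2
        rw [hv', Function.update_of_ne hl2, Function.update_of_ne hl1]
      have hv'nonneg : ∀ l, 0 ≤ v' l := by
        intro l
        by_cases h1 : l = j
        · rw [h1, hv'j]; exact add_nonneg (hv i) (hv j)
        by_cases h2 : l = i
        · rw [h2, hv'i]
        · rw [hv'l l h2 h1]; exact hv l
      -- sum is preserved
      have hsum' : ∑ l, v' l = 1 := by
        rw [hv']
        rw [Finset.sum_update_of_mem (Finset.mem_univ j)]
        rw [Finset.sum_update_of_mem (by simp [hij] : i ∈ Finset.univ \ {j})]
        have : (Finset.univ \ {j}) \ {i} = Finset.univ \ {i, j} := by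
          ext x; simp [and_comm]
        rw [this]
        have hv1 : ∑ l, v l = v j + ∑ l ∈ Finset.univ \ {j}, v l := by
          rw [← Finset.sum_sdiff (Finset.subset_univ {j}), Finset.sum_singleton]; ring
        have hv2 : ∑ l ∈ Finset.univ \ {j}, v l = v i + ∑ l ∈ Finset.univ \ {i, j}, v l := by
          rw [← Finset.sum_sdiff (by simp [hij] : {i} ⊆ Finset.univ \ {j}), Finset.sum_singleton]
          have : (Finset.univ \ {j}) \ {i} = Finset.univ \ {i, j} := by
            ext x; simp [and_comm]
          rw [this]; ring
        rw [hv1, hv2] at hsum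
        linarith
      -- support decreases
      have hcard' : (Finset.univ.filter fun l => v' l ≠ 0).card ≤ N := by
        have hsub : (Finset.univ.filter fun l => v' l ≠ 0) ⊆ s.erase i := by
          intro l hl
          have hl' : v' l ≠ 0 := (Finset.mem_filter.1 hl).2
          by_cases h2 : l = i
          · exact absurd (h2 ▸ hv'i) (h2 ▸ hl')
          by_cases h1 : l = j
          · exact Finset.mem_erase.2 ⟨h1 ▸ (Ne.symm hij), h1 ▸ hjs⟩
          · refine Finset.mem_erase.2 ⟨h2, ?_⟩
            rw [hs]
            refine Finset.mem_filter.2 ⟨Finset.mem_univ l, ?_⟩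
            rwa [← hv'l l h2 h1]
        calc (Finset.univ.filter fun l => v' l ≠ 0).card ≤ (s.erase i).card :=
              Finset.card_le_card hsub
          _ = s.card - 1 := Finset.card_erase_of_mem his
          _ ≤ N := by omega
      -- objective increases
      have hobj : (∑ a, ∑ b, if G.Adj a b then v a ^ θ * v b ^ θ else 0)
          ≤ ∑ a, ∑ b, if G.Adj a b then v' a ^ θ * v' b ^ θ else 0 := by
        rw [decomp G θ v hij hnadj, decomp G θ v' hij hnadj]
        have hP : (∑ b ∈ Finset.univ \ {i, j}, if G.Adj i b then v' b ^ θ else 0)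
            = ∑ b ∈ Finset.univ \ {i, j}, if G.Adj i b then v b ^ θ else 0 := by
          apply Finset.sum_congr rfl; intro b hb
          simp only [Finset.mem_sdiff, Finset.mem_insert, Finset.mem_singleton] at hb
          push_neg at hb
          rw [hv'l b hb.2.1 hb.2.2]
        have hQ : (∑ b ∈ Finset.univ \ {i, j}, if G.Adj j b then v' b ^ θ else 0)
            = ∑ b ∈ Finset.univ \ {i, j}, if G.Adj j b then v b ^ θ else 0 := by
          apply Finset.sum_congr rfl; intro b hb
          simp only [Finset.mem_sdiff, Finset.mem_insert, Finset.mem_singleton] at hb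
          push_neg at hb
          rw [hv'l b hb.2.1 hb.2.2]
        have hR : (∑ a ∈ Finset.univ \ {i, j}, ∑ b ∈ Finset.univ \ {i, j},
              (if G.Adj a b then v' a ^ θ * v' b ^ θ else 0))
            = ∑ a ∈ Finset.univ \ {i, j}, ∑ b ∈ Finset.univ \ {i, j},
              (if G.Adj a b then v a ^ θ * v b ^ θ else 0) := by
          apply Finset.sum_congr rfl; intro a ha
          apply Finset.sum_congr rfl; intro b hb
          simp only [Finset.mem_sdiff, Finset.mem_insert, Finset.mem_singleton] at ha hb
          push_neg at ha hb
          rw [hv'l a ha.2.1 ha.2.2, hv'l b hb.2.1 hb.2.2]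
        rw [hP, hQ, hR, hv'i, hv'j]
        set P := ∑ b ∈ Finset.univ \ {i, j}, (if G.Adj i b then v b ^ θ else 0) with hPdef
        set Q := ∑ b ∈ Finset.univ \ {i, j}, (if G.Adj j b then v b ^ θ else 0) with hQdef
        have hPnn : 0 ≤ P := by
          apply Finset.sum_nonneg; intro b _
          split
          · exact Real.rpow_nonneg (hv b) θ
          · exact le_refl 0
        have hQnn : 0 ≤ Q := le_trans hPnn hPQ
        have h0 : (0:ℝ) ^ θ = 0 := Real.zero_rpow (by linarith)
        rw [h0]
        have h1 : v i ^ θ * P ≤ v i ^ θ * Q :=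
          mul_le_mul_of_nonneg_left hPQ (Real.rpow_nonneg (hv i) θ)
        have h2 : v i ^ θ + v j ^ θ ≤ (v i + v j) ^ θ := rpow_superadd (hv i) (hv j) hθ
        have h3 : (v i ^ θ + v j ^ θ) * Q ≤ (v i + v j) ^ θ * Q :=
          mul_le_mul_of_nonneg_right h2 hQnn
        nlinarith
      exact le_trans hobj (ih v' hv'nonneg hsum' hcard')
    rcases le_total
        (∑ b ∈ Finset.univ \ {i, j}, if G.Adj i b then v b ^ θ else 0)
        (∑ b ∈ Finset.univ \ {i, j}, if G.Adj j b then v b ^ θ else 0) with h | h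
    · exact key i j his' hjs' hij hnadj h
    · refine key j i hjs' his' (Ne.symm hij) (fun hh => hnadj hh.symm) ?_
      rwa [Finset.pair_comm j i]

/-- For a symmetric conductance matrix `A` of a network on `n` vertices whose underlying
graph has maximum clique size `k`, and `1 < p < 2`,
`λ₁(A) ≤ φ_{p/(2(p-1))}(k)^{(p-1)/p} ⬝ ‖A‖_p`. -/
theorem largest_eigenvalue_le_phi_mul_Lp_norm {n : ℕ}
    (p : ℝ) (hp1 : 1 < p) (hp2 : p < 2)
    (k : ℕ) (hk : 2 ≤ k)
    (G : SimpleGraph (Fin n))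
    (A : Matrix (Fin n) (Fin n) ℝ) (hA : A.IsHermitian)
    (hsupp : ∀ i j, ¬ G.Adj i j → A i j = 0)
    (hclique_ex : ∃ s : Finset (Fin n), G.IsNClique k s)
    (hclique_max : ∀ s : Finset (Fin n), G.IsClique (s : Set (Fin n)) → s.card ≤ k) :
    (⨆ l, hA.eigenvalues l) ≤
      phiVar (p / (2 * (p - 1))) k ^ ((p - 1) / p) *
        (∑ i, ∑ j, |A i j| ^ p) ^ (1 / p) := by
  classical
  set θ : ℝ := p / (2 * (p - 1)) with hθdef
  set q : ℝ := p / (p - 1) with hqdef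
  have hp0 : 0 < p := lt_trans one_pos hp1
  have hps : 0 < p - 1 := by linarith
  have hq : p.HolderConjugate q := Real.HolderConjugate.conjExponent hp1
  have hθ1 : 1 ≤ θ := by
    rw [hθdef, le_div_iff₀ (by positivity)]
    nlinarith
  have hθ0 : 0 < θ := lt_of_lt_of_le one_pos hθ1
  have hq0 : 0 < q := hq.symm.pos
  have h2θ : 2 * θ = q := by
    rw [hθdef, hqdef]
    field_simp
  have h1q : 1 / q = (p - 1) / p := by
    rw [hqdef]
    field_simp
  have hphin : 0 ≤ phiVar θ k := phiVar_nonneg hθ0 (by omega)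
  have hAp_nonneg : (0:ℝ) ≤ ∑ i, ∑ j, |A i j| ^ p :=
    Finset.sum_nonneg fun i _ => Finset.sum_nonneg fun j _ => Real.rpow_nonneg (abs_nonneg _) _
  have hRHS : 0 ≤ phiVar θ k ^ ((p - 1) / p) * (∑ i, ∑ j, |A i j| ^ p) ^ (1 / p) :=
    mul_nonneg (Real.rpow_nonneg hphin _) (Real.rpow_nonneg hAp_nonneg _)
  rcases Nat.eq_zero_or_pos n with rfl | hn
  · have : IsEmpty (Fin 0) := by infer_instance
    rw [Real.iSup_of_isEmpty]
    exact hRHS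
  have : Nonempty (Fin n) := ⟨⟨0, hn⟩⟩
  apply ciSup_le
  intro l
  set x : Fin n → ℝ := ⇑(hA.eigenvectorBasis l) with hxdef
  -- the eigenvalue as a quadratic form
  have hval : hA.eigenvalues l = ∑ a, ∑ b, x a * (A a b * x b) := by
    rw [hA.eigenvalues_eq l]
    simp only [dotProduct, Matrix.mulVec, RCLike.re_to_real, Pi.star_apply,
      star_trivial]
    simp only [Finset.mul_sum]
    rfl
  -- unit norm
  have hx2 : ∑ a, x a ^ 2 = 1 := by
    have hnorm : ‖hA.eigenvectorBasis l‖ = 1 := hA.eigenvectorBasis.orthonormal.1 l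
    have := EuclideanSpace.norm_eq (hA.eigenvectorBasis l)
    rw [hnorm] at this
    have h' := congrArg (fun t : ℝ => t ^ 2) this.symm
    simp only [one_pow] at h'
    rw [Real.sq_sqrt (Finset.sum_nonneg fun a _ => sq_nonneg _)] at h'
    calc ∑ a, x a ^ 2 = ∑ a, ‖x a‖ ^ 2 := by
          apply Finset.sum_congr rfl; intro a _
          rw [Real.norm_eq_abs, sq_abs]
      _ = 1 := h'
  -- pass to the edge set
  set se : Finset (Fin n × Fin n) := Finset.univ.filter (fun pr => G.Adj pr.1 pr.2) with hsedef
  have hstep1 : hA.eigenvalues l ≤ ∑ pr ∈ se, |A pr.1 pr.2| * (|x pr.1| * |x pr.2|) := by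
    rw [hval]
    have ef : (∑ a, ∑ b, x a * (A a b * x b))
        = ∑ pr : Fin n × Fin n, x pr.1 * (A pr.1 pr.2 * x pr.2) :=
      (Fintype.sum_prod_type (f := fun pr : Fin n × Fin n => x pr.1 * (A pr.1 pr.2 * x pr.2))).symm
    rw [ef]
    have e1 : (∑ pr : Fin n × Fin n, x pr.1 * (A pr.1 pr.2 * x pr.2))
        = ∑ pr ∈ se, x pr.1 * (A pr.1 pr.2 * x pr.2) := by
      refine (Finset.sum_subset (Finset.filter_subset _ _) ?_).symm
      intro pr _ hpr
      have : ¬ G.Adj pr.1 pr.2 := by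
        intro h
        exact hpr (Finset.mem_filter.2 ⟨Finset.mem_univ _, h⟩)
      rw [hsupp _ _ this]
      ring
    rw [e1]
    apply Finset.sum_le_sum
    intro pr _
    calc x pr.1 * (A pr.1 pr.2 * x pr.2) ≤ |x pr.1 * (A pr.1 pr.2 * x pr.2)| := le_abs_self _
      _ = |A pr.1 pr.2| * (|x pr.1| * |x pr.2|) := by
        rw [abs_mul, abs_mul]
        ring
  have hstep2 : (∑ pr ∈ se, |A pr.1 pr.2| * (|x pr.1| * |x pr.2|))
      ≤ (∑ pr ∈ se, |A pr.1 pr.2| ^ p) ^ (1 / p)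
        * (∑ pr ∈ se, (|x pr.1| * |x pr.2|) ^ q) ^ (1 / q) := by
    have h := Real.inner_le_Lp_mul_Lq_of_nonneg se hq
      (f := fun pr : Fin n × Fin n => |A pr.1 pr.2|)
      (g := fun pr : Fin n × Fin n => |x pr.1| * |x pr.2|)
      (fun pr _ => abs_nonneg _) (fun pr _ => mul_nonneg (abs_nonneg _) (abs_nonneg _))
    exact h
  -- the matrix factor
  have hstep3 : (∑ pr ∈ se, |A pr.1 pr.2| ^ p) ^ (1 / p)
      ≤ (∑ i, ∑ j, |A i j| ^ p) ^ (1 / p) := by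
    apply Real.rpow_le_rpow
    · exact Finset.sum_nonneg fun pr _ => Real.rpow_nonneg (abs_nonneg _) _
    · have ef : (∑ i, ∑ j, |A i j| ^ p) = ∑ pr : Fin n × Fin n, |A pr.1 pr.2| ^ p :=
        (Fintype.sum_prod_type (f := fun pr : Fin n × Fin n => |A pr.1 pr.2| ^ p)).symm
      rw [ef]
      apply Finset.sum_le_sum_of_subset_of_nonneg (Finset.filter_subset _ _)
      intro pr _ _
      exact Real.rpow_nonneg (abs_nonneg _) _
    · positivity
  -- the vector factor
  have hstep4 : (∑ pr ∈ se, (|x pr.1| * |x pr.2|) ^ q)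
      = ∑ a, ∑ b, if G.Adj a b then (x a ^ 2) ^ θ * (x b ^ 2) ^ θ else 0 := by
    calc (∑ pr ∈ se, (|x pr.1| * |x pr.2|) ^ q)
        = ∑ pr : Fin n × Fin n, (if G.Adj pr.1 pr.2 then (|x pr.1| * |x pr.2|) ^ q else 0) := by
          rw [hsedef, Finset.sum_filter]
      _ = ∑ pr : Fin n × Fin n,
            (if G.Adj pr.1 pr.2 then (x pr.1 ^ 2) ^ θ * (x pr.2 ^ 2) ^ θ else 0) := by
          apply Finset.sum_congr rfl
          intro pr _
          split
          · rw [Real.mul_rpow (abs_nonneg _) (abs_nonneg _)]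
            congr 1 <;>
            · rw [← sq_abs, ← Real.rpow_natCast |_| 2, ← Real.rpow_mul (abs_nonneg _)]
              norm_num [h2θ]
          · rfl
      _ = ∑ a, ∑ b, if G.Adj a b then (x a ^ 2) ^ θ * (x b ^ 2) ^ θ else 0 :=
          Fintype.sum_prod_type (f := fun pr : Fin n × Fin n =>
            if G.Adj pr.1 pr.2 then (x pr.1 ^ 2) ^ θ * (x pr.2 ^ 2) ^ θ else 0)
  have hstep5 : (∑ a, ∑ b, if G.Adj a b then (x a ^ 2) ^ θ * (x b ^ 2) ^ θ else 0)
      ≤ phiVar θ k := by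
    apply MS hθ1 G hclique_max n (fun a => x a ^ 2) (fun a => sq_nonneg _) hx2
    calc (Finset.univ.filter fun a => x a ^ 2 ≠ 0).card ≤ Finset.univ.card :=
          Finset.card_filter_le _ _
      _ = n := by simp
  have hstep6 : (∑ pr ∈ se, (|x pr.1| * |x pr.2|) ^ q) ^ (1 / q) ≤ phiVar θ k ^ ((p-1)/p) := by
    rw [← h1q]
    apply Real.rpow_le_rpow
    · exact Finset.sum_nonneg fun pr _ =>
        Real.rpow_nonneg (mul_nonneg (abs_nonneg _) (abs_nonneg _)) _
    · rw [hstep4]; exact hstep5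
    · positivity
  calc hA.eigenvalues l ≤ ∑ pr ∈ se, |A pr.1 pr.2| * (|x pr.1| * |x pr.2|) := hstep1
    _ ≤ (∑ pr ∈ se, |A pr.1 pr.2| ^ p) ^ (1 / p)
        * (∑ pr ∈ se, (|x pr.1| * |x pr.2|) ^ q) ^ (1 / q) := hstep2
    _ ≤ (∑ i, ∑ j, |A i j| ^ p) ^ (1 / p) * (phiVar θ k ^ ((p-1)/p)) := by
        apply mul_le_mul hstep3 hstep6
        · exact Real.rpow_nonneg (Finset.sum_nonneg fun pr _ =>
            Real.rpow_nonneg (mul_nonneg (abs_nonneg _) (abs_nonneg _)) _) _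
        · exact Real.rpow_nonneg hAp_nonneg _
    _ = phiVar θ k ^ ((p-1)/p) * (∑ i, ∑ j, |A i j| ^ p) ^ (1 / p) := mul_comm _ _
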